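/- (Theorem 1, equivalence of the robust harvested-energy maximization with its one-parameter reformulation.) Let n, K, L ≥ 1; let h̄_s ∈ ℂⁿ, h̄_{e,k} ∈ ℂⁿ for k = 1,…,K, h̄_l ∈ ℂⁿ for l = 1,…,L; let σ_s, σ_e > 0, ε_s, ε_e, ε_l ≥ 0, P > 0, R ≥ 0. Define the objective g(w) = min over l = 1,…,L of the infimum over e_l ∈ ℂⁿ with ‖e_l‖ ≤ ε_l of |(h̄_l + e_l)^H w|². Define the feasible set F = { w ∈ ℂⁿ : ‖w‖² ≤ P, and (inf over ‖e_s‖ ≤ ε_s of log₂(1 + |(h̄_s + e_s)^H w|²/σ_s²)) − (max over k of sup over ‖e‖ ≤ ε_e of log₂(1 + |(h̄_{e,k} + e)^H w|²/σ_e²)) ≥ R }. For τ ≥ 0 define f(τ) = sup of g(w) over all w ∈ ℂⁿ such that ‖w‖² ≤ P, and for every k and every e with ‖e‖ ≤ ε_e: 2^R·|(h̄_{e,k} + e)^H w|²/σ_e² + (2^R − 1) ≤ τ, and for every e_s with ‖e_s‖ ≤ ε_s: |(h̄_s + e_s)^H w|²/σ_s² ≥ τ. Then sup over w ∈ F of g(w)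 equals sup over τ ≥ 0 of f(τ). -/

import Mathlib

/-- The robust harvested-energy objective
`g(w) = min_l inf_{‖e_l‖ ≤ ε_l} |(h̄_l + e_l)^H w|²`. -/
noncomputable def gObj4 (n L : ℕ) (hl : Fin L → EuclideanSpace ℂ (Fin n))
    (εl : Fin L → ℝ) (w : EuclideanSpace ℂ (Fin n)) : ℝ :=
  ⨅ l : Fin L, ⨅ e : {e : EuclideanSpace ℂ (Fin n) // ‖e‖ ≤ εl l},
    ‖(inner ℂ (hl l + e.1) w : ℂ)‖ ^ 2

/-- The robust feasible set `F` (power and worst-case secrecy-rate constraints). -/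
noncomputable def FeasSet4 (n K : ℕ) (hs : EuclideanSpace ℂ (Fin n))
    (he : Fin K → EuclideanSpace ℂ (Fin n)) (σs σe εs εe P R : ℝ) :
    Set (EuclideanSpace ℂ (Fin n)) :=
  {w | ‖w‖ ^ 2 ≤ P ∧
    (⨅ e : {e : EuclideanSpace ℂ (Fin n) // ‖e‖ ≤ εs},
        Real.logb 2 (1 + ‖(inner ℂ (hs + e.1) w : ℂ)‖ ^ 2 / σs ^ 2)) -
      (⨆ k : Fin K, ⨆ e : {e : EuclideanSpace ℂ (Fin n) // ‖e‖ ≤ εe},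
        Real.logb 2 (1 + ‖(inner ℂ (he k + e.1) w : ℂ)‖ ^ 2 / σe ^ 2)) ≥ R}

/-- The one-parameter value function `f(τ)` (extended-real valued). -/
noncomputable def fTau4 (n K L : ℕ) (hs : EuclideanSpace ℂ (Fin n))
    (he : Fin K → EuclideanSpace ℂ (Fin n)) (hl : Fin L → EuclideanSpace ℂ (Fin n))
    (σs σe εs εe : ℝ) (εl : Fin L → ℝ) (P R τ : ℝ) : EReal :=
  ⨆ w : EuclideanSpace ℂ (Fin n),
    ⨆ _ : (‖w‖ ^ 2 ≤ P ∧
        (∀ k : Fin K, ∀ e : EuclideanSpace ℂ (Fin n), ‖e‖ ≤ εe →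
          (2 : ℝ) ^ R * ‖(inner ℂ (he k + e) w : ℂ)‖ ^ 2 / σe ^ 2 + ((2 : ℝ) ^ R - 1) ≤ τ) ∧
        (∀ e : EuclideanSpace ℂ (Fin n), ‖e‖ ≤ εs →
          τ ≤ ‖(inner ℂ (hs + e) w : ℂ)‖ ^ 2 / σs ^ 2)),
      ((gObj4 n L hl εl w : ℝ) : EReal)

set_option maxHeartbeats 1600000 in
/-- Theorem 1: `sup_{w ∈ F} g(w) = sup_{τ ≥ 0} f(τ)`. -/
theorem stmt4 (n K L : ℕ) (hn : 1 ≤ n) (hK : 1 ≤ K) (hL : 1 ≤ L)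
    (hs : EuclideanSpace ℂ (Fin n))
    (he : Fin K → EuclideanSpace ℂ (Fin n)) (hl : Fin L → EuclideanSpace ℂ (Fin n))
    (σs σe εs εe P R : ℝ) (εl : Fin L → ℝ)
    (hσs : 0 < σs) (hσe : 0 < σe) (hεs : 0 ≤ εs) (hεe : 0 ≤ εe)
    (hεl : ∀ l, 0 ≤ εl l) (hP : 0 < P) (hR : 0 ≤ R) :
    (⨆ w : EuclideanSpace ℂ (Fin n),
        ⨆ _ : w ∈ FeasSet4 n K hs he σs σe εs εe P R,
          ((gObj4 n L hl εl w : ℝ) : EReal)) =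
      ⨆ τ : ℝ, ⨆ _ : 0 ≤ τ, fTau4 n K L hs he hl σs σe εs εe εl P R τ := by
  have h2 : (1:ℝ) < 2 := one_lt_two
  have h2R : (0:ℝ) < 2 ^ R := Real.rpow_pos_of_pos two_pos R
  haveI nes : Nonempty {e : EuclideanSpace ℂ (Fin n) // ‖e‖ ≤ εs} :=
    ⟨⟨0, by simpa using hεs⟩⟩
  haveI nee : Nonempty {e : EuclideanSpace ℂ (Fin n) // ‖e‖ ≤ εe} :=
    ⟨⟨0, by simpa using hεe⟩⟩
  haveI nK : Nonempty (Fin K) := ⟨⟨0, hK⟩⟩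
  apply le_antisymm
  · refine iSup_le fun w => iSup_le fun hw => ?_
    simp only [FeasSet4, Set.mem_setOf_eq] at hw
    obtain ⟨hpow, hrate⟩ := hw
    set τ : ℝ := ⨅ e : {e : EuclideanSpace ℂ (Fin n) // ‖e‖ ≤ εs},
      ‖(inner ℂ (hs + e.1) w : ℂ)‖ ^ 2 / σs ^ 2 with hτdef
    have hYnn : ∀ e : {e : EuclideanSpace ℂ (Fin n) // ‖e‖ ≤ εs},
        0 ≤ ‖(inner ℂ (hs + e.1) w : ℂ)‖ ^ 2 / σs ^ 2 := fun e => by positivity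
    have hbb : BddBelow (Set.range fun e : {e : EuclideanSpace ℂ (Fin n) // ‖e‖ ≤ εs} =>
        ‖(inner ℂ (hs + e.1) w : ℂ)‖ ^ 2 / σs ^ 2) :=
      ⟨0, by rintro _ ⟨e, rfl⟩; exact hYnn e⟩
    have hτ0 : 0 ≤ τ := le_ciInf hYnn
    have hc3 : ∀ e : EuclideanSpace ℂ (Fin n), ‖e‖ ≤ εs →
        τ ≤ ‖(inner ℂ (hs + e) w : ℂ)‖ ^ 2 / σs ^ 2 :=
      fun e he' => ciInf_le hbb ⟨e, he'⟩
    -- A ≤ logb 2 (1+τ)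
    have hAle : (⨅ e : {e : EuclideanSpace ℂ (Fin n) // ‖e‖ ≤ εs},
        Real.logb 2 (1 + ‖(inner ℂ (hs + e.1) w : ℂ)‖ ^ 2 / σs ^ 2)) ≤
        Real.logb 2 (1 + τ) := by
      set A : ℝ := ⨅ e : {e : EuclideanSpace ℂ (Fin n) // ‖e‖ ≤ εs},
        Real.logb 2 (1 + ‖(inner ℂ (hs + e.1) w : ℂ)‖ ^ 2 / σs ^ 2) with hA
      have hpow_le : ∀ e : {e : EuclideanSpace ℂ (Fin n) // ‖e‖ ≤ εs},
          (2:ℝ) ^ A - 1 ≤ ‖(inner ℂ (hs + e.1) w : ℂ)‖ ^ 2 / σs ^ 2 := by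
        intro e
        have h1 : A ≤ Real.logb 2 (1 + ‖(inner ℂ (hs + e.1) w : ℂ)‖ ^ 2 / σs ^ 2) := by
          refine ciInf_le ⟨0, ?_⟩ e
          rintro _ ⟨e', rfl⟩
          exact Real.logb_nonneg h2 (by linarith [hYnn e'])
        have h2' : (2:ℝ) ^ A ≤
            (2:ℝ) ^ Real.logb 2 (1 + ‖(inner ℂ (hs + e.1) w : ℂ)‖ ^ 2 / σs ^ 2) :=
          (Real.rpow_le_rpow_left_iff h2).2 h1
        rw [Real.rpow_logb two_pos (by norm_num) (by linarith [hYnn e])] at h2'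
        linarith
      have hτge : (2:ℝ) ^ A - 1 ≤ τ := le_ciInf hpow_le
      have h2A : (0:ℝ) < 2 ^ A := Real.rpow_pos_of_pos two_pos A
      calc A = Real.logb 2 ((2:ℝ) ^ A) := (Real.logb_rpow two_pos (by norm_num)).symm
        _ ≤ Real.logb 2 (1 + τ) := Real.logb_le_logb_of_le h2 h2A (by linarith)
    have hc2 : ∀ k (e : EuclideanSpace ℂ (Fin n)), ‖e‖ ≤ εe →
        (2:ℝ) ^ R * ‖(inner ℂ (he k + e) w : ℂ)‖ ^ 2 / σe ^ 2 + ((2:ℝ) ^ R - 1) ≤ τ := by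
      intro k e hee
      have hx0 : (0:ℝ) ≤ ‖(inner ℂ (he k + e) w : ℂ)‖ ^ 2 / σe ^ 2 := by positivity
      have hlogB : Real.logb 2 (1 + ‖(inner ℂ (he k + e) w : ℂ)‖ ^ 2 / σe ^ 2) ≤
          Real.logb 2 (1 + τ) - R := by
        have hinner : Real.logb 2 (1 + ‖(inner ℂ (he k + e) w : ℂ)‖ ^ 2 / σe ^ 2) ≤
            ⨆ e' : {e' : EuclideanSpace ℂ (Fin n) // ‖e'‖ ≤ εe},
              Real.logb 2 (1 + ‖(inner ℂ (he k + e'.1) w : ℂ)‖ ^ 2 / σe ^ 2) := by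
          have hbdd : BddAbove (Set.range fun e' : {e' : EuclideanSpace ℂ (Fin n) // ‖e'‖ ≤ εe} =>
              Real.logb 2 (1 + ‖(inner ℂ (he k + e'.1) w : ℂ)‖ ^ 2 / σe ^ 2)) := by
            refine ⟨Real.logb 2 (1 + ((‖he k‖ + εe) * ‖w‖) ^ 2 / σe ^ 2), ?_⟩
            rintro _ ⟨e', rfl⟩
            refine Real.logb_le_logb_of_le h2 (by positivity) ?_
            have h1 : ‖(inner ℂ (he k + e'.1) w : ℂ)‖ ≤ (‖he k‖ + εe) * ‖w‖ := by
              calc ‖(inner ℂ (he k + e'.1) w : ℂ)‖ ≤ ‖he k + e'.1‖ * ‖w‖ :=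
                  norm_inner_le_norm _ _
                _ ≤ (‖he k‖ + εe) * ‖w‖ := by
                    have ha := norm_add_le (he k) e'.1
                    have hb := e'.2
                    nlinarith [norm_nonneg w]
            have hsq : ‖(inner ℂ (he k + e'.1) w : ℂ)‖ ^ 2 ≤ ((‖he k‖ + εe) * ‖w‖) ^ 2 := by
              nlinarith [norm_nonneg (inner ℂ (he k + e'.1) w : ℂ)]
            gcongr
          exact le_ciSup hbdd ⟨e, hee⟩
        have houter : (⨆ e' : {e' : EuclideanSpace ℂ (Fin n) // ‖e'‖ ≤ εe},
            Real.logb 2 (1 + ‖(inner ℂ (he k + e'.1) w : ℂ)‖ ^ 2 / σe ^ 2)) ≤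
            ⨆ k' : Fin K, ⨆ e' : {e' : EuclideanSpace ℂ (Fin n) // ‖e'‖ ≤ εe},
              Real.logb 2 (1 + ‖(inner ℂ (he k' + e'.1) w : ℂ)‖ ^ 2 / σe ^ 2) :=
          le_ciSup (Finite.bddAbove_range fun k' : Fin K =>
            ⨆ e' : {e' : EuclideanSpace ℂ (Fin n) // ‖e'‖ ≤ εe},
              Real.logb 2 (1 + ‖(inner ℂ (he k' + e'.1) w : ℂ)‖ ^ 2 / σe ^ 2)) k
        have := hrate
        linarith [hAle]
      have hpos : (0:ℝ) < 1 + ‖(inner ℂ (he k + e) w : ℂ)‖ ^ 2 / σe ^ 2 := by linarith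
      have hkey : 1 + ‖(inner ℂ (he k + e) w : ℂ)‖ ^ 2 / σe ^ 2 ≤ (1 + τ) / 2 ^ R := by
        have h2' : (2:ℝ) ^ Real.logb 2 (1 + ‖(inner ℂ (he k + e) w : ℂ)‖ ^ 2 / σe ^ 2) ≤
            (2:ℝ) ^ (Real.logb 2 (1 + τ) - R) := (Real.rpow_le_rpow_left_iff h2).2 hlogB
        rw [Real.rpow_logb two_pos (by norm_num) hpos, Real.rpow_sub two_pos,
          Real.rpow_logb two_pos (by norm_num) (by linarith)] at h2'
        exact h2'
      have hmul : (1 + ‖(inner ℂ (he k + e) w : ℂ)‖ ^ 2 / σe ^ 2) * 2 ^ R ≤ 1 + τ :=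
        (le_div_iff₀ h2R).1 hkey
      have heq : (2:ℝ) ^ R * ‖(inner ℂ (he k + e) w : ℂ)‖ ^ 2 / σe ^ 2 =
          (2:ℝ) ^ R * (‖(inner ℂ (he k + e) w : ℂ)‖ ^ 2 / σe ^ 2) := by ring
      rw [heq]
      nlinarith [hmul]
    refine le_iSup_of_le τ (le_iSup_of_le hτ0 ?_)
    exact le_iSup_of_le w (le_iSup_of_le ⟨hpow, hc2, hc3⟩ le_rfl)
  · refine iSup_le fun τ => iSup_le fun hτ => iSup_le fun w => iSup_le fun hw => ?_
    obtain ⟨hpow, hc2, hc3⟩ := hw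
    refine le_iSup_of_le w (le_iSup_of_le ?_ le_rfl)
    refine ⟨hpow, ?_⟩
    have hA : Real.logb 2 (1 + τ) ≤
        ⨅ e : {e : EuclideanSpace ℂ (Fin n) // ‖e‖ ≤ εs},
          Real.logb 2 (1 + ‖(inner ℂ (hs + e.1) w : ℂ)‖ ^ 2 / σs ^ 2) :=
      le_ciInf fun e => Real.logb_le_logb_of_le h2 (by linarith)
        (by linarith [hc3 e.1 e.2])
    have hB : (⨆ k : Fin K, ⨆ e : {e : EuclideanSpace ℂ (Fin n) // ‖e‖ ≤ εe},
        Real.logb 2 (1 + ‖(inner ℂ (he k + e.1) w : ℂ)‖ ^ 2 / σe ^ 2)) ≤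
        Real.logb 2 (1 + τ) - R := by
      refine ciSup_le fun k => ciSup_le fun e => ?_
      have h := hc2 k e.1 e.2
      have hx0 : (0:ℝ) ≤ ‖(inner ℂ (he k + e.1) w : ℂ)‖ ^ 2 / σe ^ 2 := by positivity
      have heq : (2:ℝ) ^ R * ‖(inner ℂ (he k + e.1) w : ℂ)‖ ^ 2 / σe ^ 2 =
          (2:ℝ) ^ R * (‖(inner ℂ (he k + e.1) w : ℂ)‖ ^ 2 / σe ^ 2) := by ring
      rw [heq] at h
      have hkey : 1 + ‖(inner ℂ (he k + e.1) w : ℂ)‖ ^ 2 / σe ^ 2 ≤ (1 + τ) / 2 ^ R := by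
        rw [le_div_iff₀ h2R]
        nlinarith
      calc Real.logb 2 (1 + ‖(inner ℂ (he k + e.1) w : ℂ)‖ ^ 2 / σe ^ 2)
          ≤ Real.logb 2 ((1 + τ) / 2 ^ R) :=
            Real.logb_le_logb_of_le h2 (by linarith) hkey
        _ = Real.logb 2 (1 + τ) - R := by
            rw [Real.logb_div (by linarith) (ne_of_gt h2R),
              Real.logb_rpow two_pos (by norm_num)]
    show R ≤ _
    linarith
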